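/- Let F : (0,1] → ℝ be defined by F(x) = lim_{n → ∞} e^{γ} b(n, ⌊xn⌋) (this limit exists for every x ∈ (0,1]). Then for every x ∈ (0, 1/2) that is not of the form 1/m for an integer m, the function u ↦ (u/(1−u))·F(u) is differentiable at x with derivative equal to F(x/(1−x)) / (1−x)². -/

import Mathlib

open Filter Real Topology

open scoped Classical in
/-- `partitionStat n k` is the sum of `1/wλ` over all partitions `λ` of `n` whose
largest part equals `k`, where `wλ` is the product of the parts of `λ`. -/
noncomputable def partitionStat (n k : ℕ) : ℝ :=
  ∑ p ∈ Finset.univ.filter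
      (fun p : Nat.Partition n => k ∈ p.parts ∧ ∀ i ∈ p.parts, i ≤ k),
    1 / (p.parts.prod : ℝ)

open scoped Classical

lemma partitionStat_nonneg (n k : ℕ) : 0 ≤ partitionStat n k := by
  apply Finset.sum_nonneg
  intro p _
  positivity

lemma partitionStat_eq_zero_of_lt {n k : ℕ} (h : n < k) : partitionStat n k = 0 := by
  apply Finset.sum_eq_zero
  intro p hp
  simp only [Finset.mem_filter] at hp
  exfalso
  have := Multiset.single_le_sum (fun i _ => Nat.zero_le i) k hp.2.1
  rw [p.parts_sum] at this
  omega

lemma partitionStat_zero_right (n : ℕ) : partitionStat n 0 = 0 := by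
  apply Finset.sum_eq_zero
  intro p hp
  simp only [Finset.mem_filter] at hp
  exact absurd (p.parts_pos hp.2.1) (by omega)

/-- sum over partitions of r with all parts ≤ j -/
noncomputable def partW (r j : ℕ) : ℝ :=
  ∑ q ∈ Finset.univ.filter
      (fun q : Nat.Partition r => ∀ i ∈ q.parts, i ≤ j),
    1 / (q.parts.prod : ℝ)

lemma parts_eq_zero {r : ℕ} (q : Nat.Partition r) (hr : r = 0) : q.parts = 0 := by
  subst hr
  by_contra h
  obtain ⟨a, ha⟩ := Multiset.exists_mem_of_ne_zero h
  have h1 := q.parts_pos ha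
  have h2 := Multiset.single_le_sum (fun i _ => Nat.zero_le i) a ha
  rw [q.parts_sum] at h2
  omega

lemma partW_zero (j : ℕ) : partW 0 j = 1 := by
  unfold partW
  rw [Finset.filter_true_of_mem (fun q _ => by simp)]
  rw [Finset.sum_eq_single_of_mem (default : Nat.Partition 0) (Finset.mem_univ _)
    (fun q _ hq => absurd (Unique.eq_default q) hq)]
  simp

-- L1 : remove one copy of the largest part
lemma partitionStat_eq (n j : ℕ) (h1 : 1 ≤ j) (h2 : j ≤ n) :
    (j : ℝ) * partitionStat n j = partW (n - j) j := by
  unfold partitionStat partW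
  rw [Finset.mul_sum]
  refine Finset.sum_bij'
    (i := fun (p : Nat.Partition n) (hp : p ∈ Finset.univ.filter
        (fun p : Nat.Partition n => j ∈ p.parts ∧ ∀ i ∈ p.parts, i ≤ j)) =>
      (⟨p.parts.erase j, fun hi => p.parts_pos (Multiset.mem_of_mem_erase hi), by
      simp only [Finset.mem_filter, Finset.mem_univ, true_and] at hp
      have h := Multiset.cons_erase hp.1
      have h2 : (j ::ₘ p.parts.erase j).sum = n := by rw [h, p.parts_sum]
      rw [Multiset.sum_cons] at h2
      omega⟩ : Nat.Partition (n - j)))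
    (j := fun q _ => ⟨j ::ₘ q.parts, fun hi => by
        rcases Multiset.mem_cons.1 hi with h | h
        · omega
        · exact q.parts_pos h, by
      rw [Multiset.sum_cons, q.parts_sum]; omega⟩)
    ?hi ?hj ?left ?right ?val
  case hi =>
    intro p hp
    simp only [Finset.mem_filter, Finset.mem_univ, true_and] at hp ⊢
    exact fun i hi => hp.2 i (Multiset.mem_of_mem_erase hi)
  case hj =>
    intro q hq
    simp only [Finset.mem_filter, Finset.mem_univ, true_and] at hq ⊢
    refine ⟨Multiset.mem_cons_self _ _, ?_⟩
    intro i hi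
    rcases Multiset.mem_cons.1 hi with h | h
    · omega
    · exact hq i h
  case left =>
    intro p hp
    simp only [Finset.mem_filter, Finset.mem_univ, true_and] at hp
    apply Nat.Partition.ext
    exact Multiset.cons_erase hp.1
  case right =>
    intro q hq
    apply Nat.Partition.ext
    exact Multiset.erase_cons_head _ _
  case val =>
    intro p hp
    simp only [Finset.mem_filter, Finset.mem_univ, true_and] at hp
    have hprod : p.parts.prod = j * (p.parts.erase j).prod := by
      conv_lhs => rw [← Multiset.cons_erase hp.1]
      rw [Multiset.prod_cons]
    show (j:ℝ) * (1 / (p.parts.prod : ℝ)) = 1 / ((p.parts.erase j).prod : ℝ)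
    rw [hprod]
    have hj : (j : ℝ) ≠ 0 := by positivity
    push_cast
    rw [mul_one_div, div_mul_eq_div_div, div_self hj]

-- L2 : decompose by largest part
lemma partW_eq (r j : ℕ) (hr : 1 ≤ r) :
    partW r j = ∑ t ∈ Finset.Icc 1 j, partitionStat r t := by
  unfold partitionStat
  have : ∀ t, (∑ p ∈ Finset.univ.filter
      (fun p : Nat.Partition r => t ∈ p.parts ∧ ∀ i ∈ p.parts, i ≤ t),
        1 / (p.parts.prod : ℝ))
      = ∑ p ∈ (Finset.univ : Finset (Nat.Partition r)),
        if t ∈ p.parts ∧ ∀ i ∈ p.parts, i ≤ t then 1 / (p.parts.prod : ℝ) else 0 :=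
    fun t => by rw [Finset.sum_filter]
  simp_rw [this]
  rw [Finset.sum_comm]
  unfold partW
  rw [Finset.sum_filter]
  apply Finset.sum_congr rfl
  intro p _
  have hne : p.parts.toFinset.Nonempty := by
    rw [Finset.nonempty_iff_ne_empty]
    intro h
    have hp0 : p.parts = 0 := Multiset.toFinset_eq_empty.mp h
    have hs := p.parts_sum
    rw [hp0] at hs
    simp at hs
    omega
  set M := p.parts.toFinset.max' hne with hM
  have hMmem : M ∈ p.parts := Multiset.mem_toFinset.1 (p.parts.toFinset.max'_mem hne)
  have hMle : ∀ i ∈ p.parts, i ≤ M :=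
    fun i hi => p.parts.toFinset.le_max' i (Multiset.mem_toFinset.2 hi)
  have hMpos : 1 ≤ M := p.parts_pos hMmem
  by_cases hj : ∀ i ∈ p.parts, i ≤ j
  · rw [if_pos hj]
    rw [Finset.sum_eq_single_of_mem M (Finset.mem_Icc.2 ⟨hMpos, hj M hMmem⟩)]
    · rw [if_pos ⟨hMmem, hMle⟩]
    · intro t _ htM
      rw [if_neg]
      rintro ⟨ht1, ht2⟩
      exact htM (le_antisymm (hMle t ht1) (ht2 M hMmem))
  · rw [if_neg hj]
    symm
    apply Finset.sum_eq_zero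
    intro t ht
    rw [if_neg]
    rintro ⟨ht1, ht2⟩
    exact hj (fun i hi => le_trans (ht2 i hi) (Finset.mem_Icc.1 ht).2)

/-- main recurrence -/
lemma partitionStat_rec (n j : ℕ) (h1 : 1 ≤ j) (h2 : j ≤ n) :
    (j : ℝ) * partitionStat n j =
      (if n = j then 1 else 0) + ∑ t ∈ Finset.Icc 1 j, partitionStat (n - j) t := by
  rw [partitionStat_eq n j h1 h2]
  rcases eq_or_lt_of_le h2 with h | h
  · subst h
    simp only [Nat.sub_self, if_pos rfl, partW_zero]
    have : ∀ t ∈ Finset.Icc 1 j, partitionStat 0 t = 0 := by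
      intro t ht
      exact partitionStat_eq_zero_of_lt (Finset.mem_Icc.1 ht).1
    rw [Finset.sum_congr rfl this]
    simp
  · rw [if_neg (by omega), partW_eq _ _ (by omega), zero_add]

lemma bound_aux : ∀ m : ℕ, ∀ j : ℕ, 1 ≤ j →
    (if m = 0 then (1:ℝ) else 0) + ∑ t ∈ Finset.Icc 1 j, partitionStat m t ≤ j := by
  intro m
  induction m using Nat.strong_induction_on with
  | _ m IH =>
    intro j hj
    rcases Nat.eq_zero_or_pos m with hm | hm
    · subst hm
      rw [if_pos rfl]
      have : ∀ t ∈ Finset.Icc 1 j, partitionStat 0 t = 0 := fun t ht =>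
        partitionStat_eq_zero_of_lt (Finset.mem_Icc.1 ht).1
      rw [Finset.sum_congr rfl this]
      simp
      exact_mod_cast hj
    · rw [if_neg (by omega), zero_add]
      have hterm : ∀ t ∈ Finset.Icc 1 j, partitionStat m t ≤ 1 := by
        intro t ht
        obtain ⟨ht1, _⟩ := Finset.mem_Icc.1 ht
        rcases le_or_gt t m with htm | htm
        · have hrec := partitionStat_rec m t ht1 htm
          have hind : (if m = t then (1:ℝ) else 0) = (if m - t = 0 then 1 else 0) := by
            congr 1
            simp only [eq_iff_iff]
            omega
          rw [hind] at hrec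
          have hb := IH (m - t) (by omega) t ht1
          rw [← hrec] at hb
          have htpos : (0:ℝ) < t := by exact_mod_cast ht1
          nlinarith [partitionStat_nonneg m t]
        · rw [partitionStat_eq_zero_of_lt htm]
          norm_num
      calc ∑ t ∈ Finset.Icc 1 j, partitionStat m t ≤ ∑ t ∈ Finset.Icc 1 j, 1 :=
            Finset.sum_le_sum hterm
        _ = j := by simp

lemma partitionStat_le_one (n k : ℕ) : partitionStat n k ≤ 1 := by
  rcases Nat.eq_zero_or_pos k with hk | hk
  · subst hk; rw [partitionStat_zero_right]; norm_num
  rcases le_or_gt k n with hkn | hkn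
  · have hrec := partitionStat_rec n k hk hkn
    have hind : (if n = k then (1:ℝ) else 0) = (if n - k = 0 then 1 else 0) := by
      congr 1
      simp only [eq_iff_iff]
      omega
    rw [hind] at hrec
    have hb := bound_aux (n - k) k hk
    rw [← hrec] at hb
    have hkpos : (0:ℝ) < k := by exact_mod_cast hk
    nlinarith [partitionStat_nonneg n k]
  · rw [partitionStat_eq_zero_of_lt hkn]; norm_num

/-- recurrence without the indicator, in the range 1 ≤ k < n, truncated at min -/
lemma partitionStat_rec' (n k : ℕ) (h1 : 1 ≤ k) (h2 : k < n) :
    (k : ℝ) * partitionStat n k =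
      ∑ t ∈ Finset.Icc 1 (min k (n - k)), partitionStat (n - k) t := by
  rw [partitionStat_rec n k h1 (le_of_lt h2), if_neg (by omega), zero_add]
  rcases le_or_gt k (n - k) with h | h
  · rw [min_eq_left h]
  · rw [min_eq_right (le_of_lt h)]
    symm
    apply Finset.sum_subset
    · intro t ht
      simp only [Finset.mem_Icc] at *
      omega
    · intro t ht hts
      simp only [Finset.mem_Icc] at *
      exact partitionStat_eq_zero_of_lt (by omega)

section RiemannSum

variable {g : ℕ → ℝ} {B : ℝ} {m : ℕ}

lemma measurable_comp_floor (g : ℕ → ℝ) (m : ℕ) :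
    Measurable (fun y : ℝ => g ⌊y * m⌋₊) :=
  measurable_from_nat.comp (Nat.measurable_floor.comp (measurable_id.mul_const _))

lemma intervalIntegrable_comp_floor (g : ℕ → ℝ) (hgb : ∀ t, ‖g t‖ ≤ B) (m : ℕ) (a b : ℝ) :
    IntervalIntegrable (fun y : ℝ => g ⌊y * m⌋₊) MeasureTheory.volume a b := by
  rw [intervalIntegrable_iff]
  apply MeasureTheory.Integrable.mono' (g := fun _ => B)
  · exact MeasureTheory.integrableOn_const measure_Ioc_lt_top.ne
  · exact ((measurable_comp_floor g m).aestronglyMeasurable).restrict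
  · exact MeasureTheory.ae_of_all _ (fun y => hgb _)

lemma integral_step (hg0 : g 0 = 0) (hgb : ∀ t, ‖g t‖ ≤ B) (hm : 0 < m) (t : ℕ) :
    ∫ y in ((t:ℝ)/m)..(((t:ℝ)+1)/m), g ⌊y * m⌋₊ = g t / m := by
  have hmR : (0:ℝ) < m := by exact_mod_cast hm
  have hlt : (t:ℝ)/m < ((t:ℝ)+1)/m := by
    gcongr
    linarith
  have hae : ∀ᵐ (y:ℝ) ∂MeasureTheory.volume,
      y ∈ Set.uIoc ((t:ℝ)/m) (((t:ℝ)+1)/m) → g ⌊y * m⌋₊ = g t := by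
    have hsing : ∀ᵐ (y:ℝ) ∂MeasureTheory.volume, y ≠ ((t:ℝ)+1)/m := by
      rw [MeasureTheory.ae_iff]
      convert Real.volume_singleton (a := ((t:ℝ)+1)/m) using 2
      ext y
      simp
    filter_upwards [hsing] with y hy hyI
    rw [Set.uIoc_of_le (le_of_lt hlt)] at hyI
    obtain ⟨hy1, hy2⟩ := hyI
    have h1 : (t:ℝ) < y * m := by
      rw [div_lt_iff₀ hmR] at hy1
      linarith
    have h2 : y * m < (t:ℝ) + 1 := by
      rcases lt_or_eq_of_le hy2 with h | h
      · rw [lt_div_iff₀ hmR] at h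
        linarith
      · exact absurd h hy
    congr 1
    rw [Nat.floor_eq_iff (le_trans (Nat.cast_nonneg t) (le_of_lt h1))]
    constructor
    · exact_mod_cast le_of_lt h1
    · exact_mod_cast h2
  rw [intervalIntegral.integral_congr_ae hae, intervalIntegral.integral_const]
  rw [smul_eq_mul]
  field_simp
  ring

lemma sum_eq_integral (hg0 : g 0 = 0) (hgb : ∀ t, ‖g t‖ ≤ B) (hm : 0 < m) (T : ℕ) :
    ∫ y in (0:ℝ)..(((T:ℝ)+1)/m), g ⌊y * m⌋₊ = (∑ t ∈ Finset.Icc 1 T, g t) / m := by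
  induction T with
  | zero =>
    have h := integral_step hg0 hgb hm 0 (g := g)
    norm_num at h ⊢
    rw [h, hg0]
    simp
  | succ T IH =>
    have hadd : ∫ y in (0:ℝ)..(((T:ℝ)+1+1)/m), g ⌊y * m⌋₊ =
        (∫ y in (0:ℝ)..(((T:ℝ)+1)/m), g ⌊y * m⌋₊) +
        ∫ y in (((T:ℝ)+1)/m)..(((T:ℝ)+1+1)/m), g ⌊y * m⌋₊ :=
      (intervalIntegral.integral_add_adjacent_intervals
        (intervalIntegrable_comp_floor g hgb m _ _)
        (intervalIntegrable_comp_floor g hgb m _ _)).symm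
    have hstep := integral_step hg0 hgb hm (T + 1) (g := g)
    push_cast at hstep ⊢
    rw [hadd, IH, hstep, Finset.sum_Icc_succ_top (by omega)]
    ring

end RiemannSum

noncomputable def γe : ℝ := Real.exp Real.eulerMascheroniConstant

lemma γe_pos : 0 < γe := Real.exp_pos _

lemma normA_le (m t : ℕ) : ‖γe * partitionStat m t‖ ≤ γe := by
  have h1 := partitionStat_nonneg m t
  have h2 := partitionStat_le_one m t
  have h3 := γe_pos
  rw [Real.norm_eq_abs, abs_of_nonneg (by positivity)]
  nlinarith

lemma key_identity (F : ℝ → ℝ)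
    (hF : ∀ x ∈ Set.Ioc (0 : ℝ) 1,
      Tendsto (fun n : ℕ => γe * partitionStat n ⌊x * n⌋₊) atTop (𝓝 (F x)))
    (u : ℝ) (hu : u ∈ Set.Ioo (0:ℝ) 1) :
    u * F u = (1 - u) * ∫ y in (0:ℝ)..(min (u/(1-u)) 1), F y := by
  obtain ⟨hu0, hu1⟩ := hu
  have h1u : (0:ℝ) < 1 - u := by linarith
  set k : ℕ → ℕ := fun n => ⌊u * n⌋₊ with hk
  set M : ℕ → ℕ := fun n => n - k n with hM
  set c : ℝ := min (u/(1-u)) 1 with hc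
  have hcpos : 0 < c := by
    apply lt_min (by positivity) one_pos
  have hcle1 : c ≤ 1 := min_le_right _ _
  -- eventual structural facts
  have hev : ∀ᶠ n in atTop, 1 ≤ k n ∧ k n < n := by
    have h2 : Tendsto (fun n : ℕ => u * n) atTop atTop :=
      (tendsto_natCast_atTop_atTop (R := ℝ)).const_mul_atTop hu0
    filter_upwards [h2.eventually_ge_atTop 1, eventually_ge_atTop 1] with n hn1 hn2
    constructor
    · exact Nat.le_floor (by exact_mod_cast hn1)
    · rw [hk]
      simp only
      rw [Nat.floor_lt (by positivity)]
      have : (1:ℝ) ≤ (n:ℝ) := by exact_mod_cast hn2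
      nlinarith
  -- convergence facts
  have hkdiv : Tendsto (fun n : ℕ => (k n : ℝ)/n) atTop (𝓝 u) :=
    (tendsto_nat_floor_mul_div_atTop (le_of_lt hu0)).comp tendsto_natCast_atTop_atTop
  have hMcast : ∀ᶠ n in atTop, (M n : ℝ) = n - k n := by
    filter_upwards [hev] with n hn
    rw [hM]
    simp only
    rw [Nat.cast_sub (le_of_lt hn.2)]
  have hMdiv : Tendsto (fun n : ℕ => (M n : ℝ)/n) atTop (𝓝 (1 - u)) := by
    apply Filter.Tendsto.congr' (f₁ := fun n : ℕ => 1 - (k n : ℝ)/n)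
    · filter_upwards [hMcast, eventually_ge_atTop 1] with n hn hn1
      rw [hn]
      have : (n:ℝ) ≠ 0 := by positivity
      field_simp
    · exact (tendsto_const_nhds.sub hkdiv)
  have hMtop : Tendsto M atTop atTop := by
    rw [← tendsto_natCast_atTop_iff (R := ℝ)]
    apply tendsto_atTop_mono' _ (f₁ := fun n : ℕ => (1 - u) * n - 1)
    · filter_upwards [hMcast] with n hn
      rw [hn]
      have h1 : (k n : ℝ) ≤ u * n := Nat.floor_le (by positivity)
      nlinarith
    · apply Filter.tendsto_atTop_add_const_right
      exact (tendsto_natCast_atTop_atTop (R := ℝ)).const_mul_atTop h1u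
  have hMpos : ∀ᶠ n in atTop, 0 < M n := hMtop.eventually_gt_atTop 0
  set T : ℕ → ℕ := fun n => min (k n) (M n) with hT
  have hTdiv : Tendsto (fun n : ℕ => (T n : ℝ)/(M n)) atTop (𝓝 c) := by
    have hkM : Tendsto (fun n : ℕ => (k n : ℝ)/(M n)) atTop (𝓝 (u/(1-u))) := by
      apply Filter.Tendsto.congr' (f₁ := fun n : ℕ => ((k n : ℝ)/n)/((M n : ℝ)/n))
      · filter_upwards [hMpos, eventually_ge_atTop 1] with n hn hn1
        have h1 : (n:ℝ) ≠ 0 := by positivity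
        have h2 : (M n : ℝ) ≠ 0 := by
          have : (0:ℝ) < M n := by exact_mod_cast hn
          positivity
        field_simp
      · exact hkdiv.div hMdiv (ne_of_gt h1u)
    apply Filter.Tendsto.congr' (f₁ := fun n : ℕ => min ((k n : ℝ)/(M n)) ((M n : ℝ)/(M n)))
    · filter_upwards [hMpos] with n hn
      have h2 : (0:ℝ) ≤ (M n : ℝ) := by positivity
      rw [min_div_div_right h2]
      rw [hT]
      simp only
      rw [Nat.cast_min]
    · have hone : Tendsto (fun n : ℕ => (M n : ℝ)/(M n)) atTop (𝓝 1) := by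
        apply Filter.Tendsto.congr' (f₁ := fun _ : ℕ => (1:ℝ))
        · filter_upwards [hMpos] with n hn
          have : (M n : ℝ) ≠ 0 := by
            have : (0:ℝ) < M n := by exact_mod_cast hn
            positivity
          field_simp
        · exact tendsto_const_nhds
      exact hkM.min hone
  have hsdiv : Tendsto (fun n : ℕ => ((T n : ℝ)+1)/(M n)) atTop (𝓝 c) := by
    have h0 : Tendsto (fun n : ℕ => (1:ℝ)/(M n)) atTop (𝓝 0) := by
      simp only [one_div]
      exact tendsto_inv_atTop_zero.comp (tendsto_natCast_atTop_atTop.comp hMtop)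
    have h1 := hTdiv.add h0
    rw [add_zero] at h1
    exact h1.congr (fun n => (add_div _ _ _).symm)
  have hmain : ∀ᶠ n in atTop,
      ((k n : ℝ)/n) * (γe * partitionStat n (k n))
        = ((M n : ℝ)/n) * ∫ y in (0:ℝ)..(((T n : ℝ)+1)/(M n)),
            γe * partitionStat (M n) ⌊y * (M n)⌋₊ := by
    filter_upwards [hev, hMpos, eventually_ge_atTop 1] with n hn hMp hn1
    have hrec := partitionStat_rec' n (k n) hn.1 hn.2
    have hMn : M n = n - k n := rfl
    have hTn : T n = min (k n) (M n) := rfl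
    rw [← hMn] at hrec
    rw [← hTn] at hrec
    have hsum := sum_eq_integral (g := fun t => γe * partitionStat (M n) t) (B := γe)
      (by show γe * partitionStat (M n) 0 = 0; rw [partitionStat_zero_right, mul_zero]) (fun t => normA_le _ _) hMp (T n)
    rw [hsum, ← Finset.mul_sum, ← hrec]
    have hMne : ((M n : ℕ) : ℝ) ≠ 0 := by
      have : (0:ℝ) < M n := by exact_mod_cast hMp
      positivity
    have hnne : ((n : ℕ) : ℝ) ≠ 0 := by
      have : (0:ℝ) < (n:ℝ) := by exact_mod_cast hn1
      positivity
    field_simp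
  have hL : Tendsto (fun n : ℕ => ((k n : ℝ)/n) * (γe * partitionStat n (k n)))
      atTop (𝓝 (u * F u)) :=
    hkdiv.mul (hF u ⟨hu0, le_of_lt hu1⟩)
  have hDCT : Tendsto (fun n : ℕ => ∫ y in (0:ℝ)..c, γe * partitionStat (M n) ⌊y * (M n)⌋₊)
      atTop (𝓝 (∫ y in (0:ℝ)..c, F y)) := by
    apply intervalIntegral.tendsto_integral_filter_of_dominated_convergence
      (bound := fun _ => γe)
    · exact Eventually.of_forall
        (fun n => ((measurable_comp_floor (fun t => γe * partitionStat (M n) t)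
          (M n)).aestronglyMeasurable).restrict)
    · exact Eventually.of_forall (fun n => MeasureTheory.ae_of_all _ (fun y _ => normA_le _ _))
    · exact intervalIntegrable_const
    · apply MeasureTheory.ae_of_all
      intro y hy
      rw [Set.uIoc_of_le (le_of_lt hcpos)] at hy
      have hy01 : y ∈ Set.Ioc (0:ℝ) 1 := ⟨hy.1, le_trans hy.2 hcle1⟩
      exact (hF y hy01).comp hMtop
  have htail : Tendsto (fun n : ℕ => ∫ y in c..(((T n : ℝ)+1)/(M n)),
      γe * partitionStat (M n) ⌊y * (M n)⌋₊) atTop (𝓝 0) := by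
    apply squeeze_zero_norm (a := fun n => γe * |(((T n : ℝ)+1)/(M n)) - c|)
    · intro n
      have h := intervalIntegral.norm_integral_le_of_norm_le_const
        (a := c) (b := ((T n : ℝ)+1)/(M n)) (C := γe)
        (f := fun y => γe * partitionStat (M n) ⌊y * (M n)⌋₊)
        (fun y _ => normA_le _ _)
      exact h
    · have h1 : Tendsto (fun n : ℕ => (((T n : ℝ)+1)/(M n)) - c) atTop (𝓝 0) := by
        simpa using hsdiv.sub (tendsto_const_nhds (x := c))
      have h2 := (h1.abs).const_mul γe
      simpa using h2
  have hR : Tendsto (fun n : ℕ => ((M n : ℝ)/n) * ∫ y in (0:ℝ)..(((T n : ℝ)+1)/(M n)),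
      γe * partitionStat (M n) ⌊y * (M n)⌋₊)
      atTop (𝓝 ((1-u) * ∫ y in (0:ℝ)..c, F y)) := by
    have hsplit : ∀ n : ℕ, (∫ y in (0:ℝ)..(((T n : ℝ)+1)/(M n)),
          γe * partitionStat (M n) ⌊y * (M n)⌋₊)
        = (∫ y in (0:ℝ)..c, γe * partitionStat (M n) ⌊y * (M n)⌋₊)
          + ∫ y in c..(((T n : ℝ)+1)/(M n)), γe * partitionStat (M n) ⌊y * (M n)⌋₊ := fun n =>
      (intervalIntegral.integral_add_adjacent_intervals
        (intervalIntegrable_comp_floor _ (normA_le _) _ _ _)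
        (intervalIntegrable_comp_floor _ (normA_le _) _ _ _)).symm
    have h2 := hDCT.add htail
    rw [add_zero] at h2
    exact hMdiv.mul (h2.congr (fun n => (hsplit n).symm))
  exact tendsto_nhds_unique (hL.congr' hmain) hR

section FProps

variable (F : ℝ → ℝ)
  (hF : ∀ x ∈ Set.Ioc (0 : ℝ) 1,
      Tendsto (fun n : ℕ => γe * partitionStat n ⌊x * n⌋₊) atTop (𝓝 (F x)))

include hF

lemma F_meas : MeasureTheory.AEStronglyMeasurable F
    (MeasureTheory.volume.restrict (Set.Ioc (0:ℝ) 1)) := by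
  apply aestronglyMeasurable_of_tendsto_ae atTop
    (f := fun (n : ℕ) (y : ℝ) => γe * partitionStat n ⌊y * n⌋₊)
  · intro n
    exact ((measurable_comp_floor (fun t => γe * partitionStat n t) n).aestronglyMeasurable).restrict
  · rw [MeasureTheory.ae_restrict_iff' measurableSet_Ioc]
    exact MeasureTheory.ae_of_all _ (fun y hy => hF y hy)

lemma F_bound : ∀ y ∈ Set.Ioc (0:ℝ) 1, ‖F y‖ ≤ γe := by
  intro y hy
  have h1 : 0 ≤ F y := ge_of_tendsto (hF y hy) (Eventually.of_forall (fun n => by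
    have := partitionStat_nonneg n ⌊y * n⌋₊
    have := γe_pos
    positivity))
  have h2 : F y ≤ γe := le_of_tendsto (hF y hy) (Eventually.of_forall (fun n => by
    have h3 := partitionStat_le_one n ⌊y * n⌋₊
    have h4 := γe_pos
    nlinarith))
  rw [Real.norm_eq_abs, abs_of_nonneg h1]
  exact h2

lemma F_integrableOn : MeasureTheory.IntegrableOn F (Set.Ioc (0:ℝ) 1) := by
  apply MeasureTheory.Integrable.mono' (g := fun _ => γe)
  · exact MeasureTheory.integrableOn_const measure_Ioc_lt_top.ne
  · exact F_meas F hF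
  · rw [MeasureTheory.ae_restrict_iff' measurableSet_Ioc]
    exact MeasureTheory.ae_of_all _ (F_bound F hF)

lemma F_intervalIntegrable : ∀ b ∈ Set.Icc (0:ℝ) 1,
    IntervalIntegrable F MeasureTheory.volume 0 b := by
  intro b hb
  rw [intervalIntegrable_iff]
  apply (F_integrableOn F hF).mono_set
  rw [Set.uIoc_of_le hb.1]
  exact Set.Ioc_subset_Ioc_right hb.2

lemma F_cont : ∀ u ∈ Set.Ioo (0:ℝ) 1, ContinuousAt F u := by
  intro u hu
  set Φ : ℝ → ℝ := fun y => ∫ t in (0:ℝ)..y, F t with hΦ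
  have hΦcont : ContinuousOn Φ (Set.Icc 0 1) := by
    have h1 : MeasureTheory.IntegrableOn F (Set.uIcc 0 1) := by
      rw [Set.uIcc_of_le zero_le_one]
      rw [integrableOn_Icc_iff_integrableOn_Ioc]
      exact F_integrableOn F hF
    have := intervalIntegral.continuousOn_primitive_interval h1
    rwa [Set.uIcc_of_le zero_le_one] at this
  set ψ : ℝ → ℝ := fun v => min (v/(1-v)) 1 with hψ
  have hψcont : ContinuousAt ψ u := by
    have hd : ContinuousAt (fun v : ℝ => v/(1-v)) u := by
      apply ContinuousAt.div continuousAt_id (continuousAt_const.sub continuousAt_id)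
      show (1:ℝ) - id u ≠ 0
      simp only [id]
      linarith [hu.2]
    exact hd.min continuousAt_const
  have hψmem : ∀ v ∈ Set.Ioo (0:ℝ) 1, ψ v ∈ Set.Icc (0:ℝ) 1 := by
    intro v hv
    constructor
    · apply le_min _ zero_le_one
      have h5 : 0 < 1 - v := by linarith [hv.2]
      exact le_of_lt (div_pos hv.1 h5)
    · exact min_le_right _ _
  have hcomp : ContinuousAt (fun v => Φ (ψ v)) u := by
    have h1 : ContinuousWithinAt Φ (Set.Icc 0 1) (ψ u) :=
      hΦcont (ψ u) (hψmem u hu)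
    have h3 : ∀ᶠ v in 𝓝 u, ψ v ∈ Set.Icc (0:ℝ) 1 := by
      filter_upwards [isOpen_Ioo.mem_nhds hu] with v hv
      exact hψmem v hv
    exact h1.tendsto.comp (tendsto_nhdsWithin_of_tendsto_nhds_of_eventually_within ψ hψcont h3)
  have hg : ContinuousAt (fun v => ((1-v) * Φ (ψ v))/v) u := by
    apply ContinuousAt.div _ continuousAt_id (ne_of_gt hu.1)
    exact (continuousAt_const.sub continuousAt_id).mul hcomp
  apply hg.congr
  have hopen : Set.Ioo (0:ℝ) 1 ∈ 𝓝 u := isOpen_Ioo.mem_nhds hu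
  filter_upwards [hopen] with v hv
  have hkey := key_identity F hF v hv
  have hvne : v ≠ 0 := ne_of_gt hv.1
  field_simp
  rw [← hkey]

end FProps

theorem deriv_of_limit_function (F : ℝ → ℝ)
    (hF : ∀ x ∈ Set.Ioc (0 : ℝ) 1,
      Tendsto
        (fun n : ℕ =>
          Real.exp Real.eulerMascheroniConstant * partitionStat n ⌊x * n⌋₊)
        atTop (𝓝 (F x)))
    (x : ℝ) (hx : x ∈ Set.Ioo (0 : ℝ) (1 / 2)) (hm : ∀ m : ℤ, x ≠ 1 / (m : ℝ)) :
    HasDerivAt (fun u : ℝ => u / (1 - u) * F u)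
      (F (x / (1 - x)) / (1 - x) ^ 2) x := by
  have hF' : ∀ x ∈ Set.Ioc (0:ℝ) 1,
      Tendsto (fun n : ℕ => γe * partitionStat n ⌊x * n⌋₊) atTop (𝓝 (F x)) := hF
  obtain ⟨hx0, hx2⟩ := hx
  have h1x : 0 < 1 - x := by linarith
  have h1xne : (1:ℝ) - x ≠ 0 := ne_of_gt h1x
  set cx : ℝ := x/(1-x) with hcx
  have hcx1 : cx < 1 := by rw [hcx, div_lt_one h1x]; linarith
  have hcx0 : 0 < cx := div_pos hx0 h1x
  set Φ : ℝ → ℝ := fun y => ∫ t in (0:ℝ)..y, F t with hΦ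
  have hΦd : HasDerivAt Φ (F cx) cx := by
    apply intervalIntegral.integral_hasDerivAt_right
    · exact F_intervalIntegrable F hF' cx ⟨le_of_lt hcx0, le_of_lt hcx1⟩
    · exact ⟨Set.Ioc 0 1,
        Filter.mem_of_superset (isOpen_Ioo.mem_nhds ⟨hcx0, hcx1⟩) Set.Ioo_subset_Ioc_self,
        F_meas F hF'⟩
    · exact F_cont F hF' cx ⟨hcx0, hcx1⟩
  have hcd : HasDerivAt (fun u : ℝ => u/(1-u)) (1/(1-x)^2) x := by
    have h := (hasDerivAt_id x).div ((hasDerivAt_id x).const_sub 1)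
      (by show (1:ℝ) - id x ≠ 0; simpa using h1xne)
    have h' : HasDerivAt (fun u : ℝ => u/(1-u)) ((1 * (1 - id x) - id x * (-1))/(1 - id x)^2) x := h
    convert h' using 1
    show (1:ℝ)/(1-x)^2 = (1 * (1 - id x) - id x * (-1))/(1 - id x)^2
    simp only [id]
    ring
  have hcomp := hΦd.comp x hcd
  have heq : (fun u : ℝ => u/(1-u) * F u) =ᶠ[𝓝 x] (Φ ∘ fun u : ℝ => u/(1-u)) := by
    filter_upwards [isOpen_Ioo.mem_nhds (⟨hx0, hx2⟩ : x ∈ Set.Ioo (0:ℝ) (1/2))] with v hv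
    have hv1 : v < 1 := by linarith [hv.2]
    have h1v : 0 < 1 - v := by linarith
    have h1vne : (1:ℝ) - v ≠ 0 := ne_of_gt h1v
    have hkey := key_identity F hF' v ⟨hv.1, hv1⟩
    have hmin : min (v/(1-v)) 1 = v/(1-v) :=
      min_eq_left (le_of_lt (by rw [div_lt_one h1v]; linarith [hv.2]))
    rw [hmin] at hkey
    show v/(1-v) * F v = Φ (v/(1-v))
    rw [div_mul_eq_mul_div, hkey, mul_comm, mul_div_assoc, div_self h1vne, mul_one]
  have hfinal := hcomp.congr_of_eventuallyEq heq
  rw [show F cx/(1-x)^2 = F cx * (1/(1-x)^2) from by ring]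
  exact hfinal
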